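/- Suppose the sequences are generated by Algorithm II, and assume E_0 > 0 if p ≥ 2. Then for every integer k ≥ 1: γ_k ≤ ((p+1)^{(3p+1)/2}/θ)·(2E_0/(1 − σ²))^{(p−1)/2}·k^{−(3p+1)/2}. -/

import Mathlib

open scoped RealInnerProductSpace
open Real



-- Bernoulli-type tangent inequality for concave rpow
lemma aux_concave {s a b : ℝ} (hs0 : 0 < s) (hs1 : s ≤ 1) (hb : 0 < b) (hba : b ≤ a) :
    s * ((a - b) * a ^ (s - 1)) ≤ a ^ s - b ^ s := by
  have ha : 0 < a := lt_of_lt_of_le hb hba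
  have ht : (0:ℝ) < b / a := div_pos hb ha
  have ht1 : b / a ≤ 1 := (div_le_one ha).2 hba
  have hber : (b / a) ^ s ≤ 1 + s * (b / a - 1) := by
    have := rpow_one_add_le_one_add_mul_self (s := b / a - 1) (by linarith) hs0.le hs1
    simpa using this
  have hdiv : (b / a) ^ s = b ^ s / a ^ s := Real.div_rpow hb.le ha.le s
  have has : (0:ℝ) < a ^ s := Real.rpow_pos_of_pos ha s
  have key : b ^ s ≤ (1 + s * (b / a - 1)) * a ^ s := by
    rw [hdiv] at hber
    calc b ^ s = b ^ s / a ^ s * a ^ s := by field_simp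
    _ ≤ (1 + s * (b / a - 1)) * a ^ s := by nlinarith
  have hpow : a ^ (s - 1) = a ^ s / a := by
    rw [Real.rpow_sub ha, Real.rpow_one]
  rw [hpow]
  have : s * ((a - b) * (a ^ s / a)) = s * (1 - b/a) * a ^ s := by field_simp
  rw [this]
  nlinarith

lemma aux_holder {ι : Type*} (s : Finset ι) (u δ : ι → ℝ)
    (hu : ∀ i ∈ s, 0 ≤ u i) (hδ : ∀ i ∈ s, 0 ≤ δ i)
    {a b : ℝ} (ha : 0 < a) (hb : 0 ≤ b) (hab : a + b = 1) :
    ∑ i ∈ s, u i ^ a * δ i ^ b ≤ (∑ i ∈ s, u i) ^ a * (∑ i ∈ s, δ i) ^ b := by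
  rcases eq_or_lt_of_le hb with hb0 | hb0
  · -- b = 0, a = 1
    have ha1 : a = 1 := by linarith
    simp [← hb0, ha1]
  · have hSu : 0 ≤ ∑ i ∈ s, u i := Finset.sum_nonneg hu
    have hSδ : 0 ≤ ∑ i ∈ s, δ i := Finset.sum_nonneg hδ
    rcases eq_or_lt_of_le hSu with hSu0 | hSu0
    · -- all u i = 0
      have : ∀ i ∈ s, u i ^ a * δ i ^ b = 0 := by
        intro i hi
        have : u i = 0 := by
          have := Finset.sum_eq_zero_iff_of_nonneg hu |>.1 hSu0.symm i hi
          exact this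
        rw [this, Real.zero_rpow ha.ne', zero_mul]
      rw [Finset.sum_congr rfl this, Finset.sum_const, ← hSu0,
        Real.zero_rpow ha.ne', zero_mul]
      simp
    rcases eq_or_lt_of_le hSδ with hSδ0 | hSδ0
    · have : ∀ i ∈ s, u i ^ a * δ i ^ b = 0 := by
        intro i hi
        have : δ i = 0 := Finset.sum_eq_zero_iff_of_nonneg hδ |>.1 hSδ0.symm i hi
        rw [this, Real.zero_rpow hb0.ne', mul_zero]
      rw [Finset.sum_congr rfl this, Finset.sum_const, ← hSδ0,
        Real.zero_rpow hb0.ne', mul_zero]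
      simp
    · set Su := ∑ i ∈ s, u i
      set Sδ := ∑ i ∈ s, δ i
      have key : ∀ i ∈ s, u i ^ a * δ i ^ b ≤
          Su ^ a * Sδ ^ b * (a * (u i / Su) + b * (δ i / Sδ)) := by
        intro i hi
        have h1 : u i ^ a = Su ^ a * (u i / Su) ^ a := by
          rw [← Real.mul_rpow hSu (div_nonneg (hu i hi) hSu)]
          congr 1; field_simp
        have h2 : δ i ^ b = Sδ ^ b * (δ i / Sδ) ^ b := by
          rw [← Real.mul_rpow hSδ (div_nonneg (hδ i hi) hSδ)]
          congr 1; field_simp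
        rw [h1, h2]
        have := Real.geom_mean_le_arith_mean2_weighted ha.le hb0.le
          (div_nonneg (hu i hi) hSu) (div_nonneg (hδ i hi) hSδ) hab
        calc Su ^ a * (u i / Su) ^ a * (Sδ ^ b * (δ i / Sδ) ^ b)
            = Su ^ a * Sδ ^ b * ((u i / Su) ^ a * (δ i / Sδ) ^ b) := by ring
          _ ≤ Su ^ a * Sδ ^ b * (a * (u i / Su) + b * (δ i / Sδ)) := by
              apply mul_le_mul_of_nonneg_left this (by positivity)
      calc ∑ i ∈ s, u i ^ a * δ i ^ b
          ≤ ∑ i ∈ s, Su ^ a * Sδ ^ b * (a * (u i / Su) + b * (δ i / Sδ)) :=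
            Finset.sum_le_sum key
        _ = Su ^ a * Sδ ^ b * (a + b) := by
            rw [← Finset.mul_sum]
            congr 1
            rw [Finset.sum_add_distrib, ← Finset.mul_sum, ← Finset.mul_sum,
              ← Finset.sum_div, ← Finset.sum_div, div_self hSu0.ne', div_self hSδ0.ne',
              mul_one, mul_one]
        _ = Su ^ a * Sδ ^ b := by rw [hab, mul_one]

lemma lyap_step {H : Type*} [NormedAddCommGroup H] [InnerProductSpace ℝ H]
    (Φ : H → ℝ) (xstar xk X vk vk1 V W : H) (A A' a lm ε σ : ℝ)
    (hA : 0 < A) (hA' : 0 < A') (hlm : 0 < lm) (ha : 0 < a)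
    (hAa : A' = A + a)
    (ha2 : a ^ 2 = lm * A')
    (hVeq : A • xk + a • vk = A' • V)
    (hv1 : vk1 = vk - a • W)
    (h1 : Φ X + ⟪xstar - X, W⟫ - ε ≤ Φ xstar)
    (h2 : Φ X + ⟪xk - X, W⟫ - ε ≤ Φ xk)
    (herr : ‖lm • W + X - V‖ ^ 2 + 2 * lm * ε ≤ σ ^ 2 * ‖X - V‖ ^ 2) :
    A' * (Φ X - Φ xstar) + (1/2) * ‖vk1 - xstar‖ ^ 2 ≤
      A * (Φ xk - Φ xstar) + (1/2) * ‖vk - xstar‖ ^ 2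
        - ((1 - σ ^ 2) / (2 * lm)) * A' * ‖X - V‖ ^ 2 := by
  have e1 : ‖vk1 - xstar‖ ^ 2
      = ‖vk - xstar‖ ^ 2 - 2 * (a * ⟪vk - xstar, W⟫) + a ^ 2 * ‖W‖ ^ 2 := by
    rw [hv1, sub_right_comm]
    rw [@norm_sub_sq_real _ _ _ (vk - xstar) (a • W)]
    rw [real_inner_smul_right, norm_smul]
    simp [mul_pow, abs_of_pos ha]
  have e2 : ‖lm • W + X - V‖ ^ 2
      = lm ^ 2 * ‖W‖ ^ 2 + 2 * (lm * ⟪X - V, W⟫) + ‖X - V‖ ^ 2 := by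
    rw [add_sub_assoc, @norm_add_sq_real _ _ _ (lm • W) (X - V)]
    rw [real_inner_smul_left, norm_smul, real_inner_comm]
    simp [mul_pow, abs_of_pos hlm]
  have e3 : A * ⟪xk, W⟫ + a * ⟪vk, W⟫ = A' * ⟪V, W⟫ := by
    have := congrArg (fun z => ⟪z, W⟫) hVeq
    simpa [inner_add_left, real_inner_smul_left] using this
  have expand : ∀ y z : H, ⟪y - z, W⟫ = ⟪y, W⟫ - ⟪z, W⟫ := fun y z => inner_sub_left y z W
  rw [expand] at h1 h2
  rw [e2, expand] at herr
  rw [e1, expand]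
  set P := ⟪X, W⟫
  set Q := ⟪xk, W⟫
  set R := ⟪vk, W⟫
  set S := ⟪xstar, W⟫
  set T := ⟪V, W⟫
  set n := ‖W‖ ^ 2 with hn
  set r2 := ‖X - V‖ ^ 2 with hr2
  have hnn : 0 ≤ n := by rw [hn]; positivity
  have hr2n : 0 ≤ r2 := by rw [hr2]; positivity
  have key : 2 * lm * (A' * (P - T) + (a ^ 2 / 2) * n + A' * ε
      + (1 - σ ^ 2) / (2 * lm) * A' * r2) ≤ 0 := by
    have hc : 2 * lm * ((1 - σ ^ 2) / (2 * lm) * A' * r2) = (1 - σ ^ 2) * A' * r2 := by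
      field_simp
    have hint := mul_le_mul_of_nonneg_left herr hA'.le
    rw [ha2]
    linarith [hint, hc]
  have h2lm : (0:ℝ) < 2 * lm := by positivity
  have key2 : A' * (P - T) + (a ^ 2 / 2) * n + A' * ε
      + (1 - σ ^ 2) / (2 * lm) * A' * r2 ≤ 0 := by
    have key' : 2 * lm * (A' * (P - T) + (a ^ 2 / 2) * n + A' * ε
        + (1 - σ ^ 2) / (2 * lm) * A' * r2) ≤ 2 * lm * 0 := by
      rw [mul_zero]; exact key
    exact (mul_le_mul_iff_right₀ h2lm).mp key'
  have h1a := mul_le_mul_of_nonneg_left h1 ha.le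
  have h2A := mul_le_mul_of_nonneg_left h2 hA.le
  subst hAa
  nlinarith [h1a, h2A, e3, key2]

lemma aux_step (p : ℕ) (hp : 1 ≤ p) (θ lm A A' r : ℝ) (hθ : 0 < θ) (hlm : 0 < lm)
    (hA' : 0 < A') (hΔ : A < A')
    (ha2 : (A' - A) ^ 2 = lm * A')
    (hls : θ ≤ lm * r ^ (p - 1)) (hr : 0 ≤ r) :
    θ ^ (2 / (3 * (p:ℝ) + 1)) ≤
      ((A' - A) * A' ^ (-((p:ℝ) / ((p:ℝ) + 1)))) ^ (2 * ((p:ℝ) + 1) / (3 * (p:ℝ) + 1)) *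
        (A' * r ^ 2 / lm) ^ (((p:ℝ) - 1) / (3 * (p:ℝ) + 1)) := by
  set P : ℝ := (p:ℝ) with hP
  have hP1 : (1:ℝ) ≤ P := by rw [hP]; exact_mod_cast hp
  have h3P : (0:ℝ) < 3 * P + 1 := by linarith
  have hP1' : (0:ℝ) < P + 1 := by linarith
  have hΔ0 : 0 < A' - A := by linarith
  have hApow : (0:ℝ) < A' ^ (-(P / (P + 1))) := rpow_pos_of_pos hA' _
  have hu : 0 < (A' - A) * A' ^ (-(P / (P + 1))) := mul_pos hΔ0 hApow
  rcases eq_or_lt_of_le hp with hp1 | hp2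
  · -- p = 1
    have hp1' : p = 1 := hp1.symm
    subst hp1'
    have hPv : P = 1 := by norm_num [hP]
    rw [hPv]
    norm_num
    have hls1 : θ ≤ lm := by simpa using hls
    have e0 : A' - A = (lm * A') ^ ((1:ℝ)/2) := by
      have h2 : ((A' - A) ^ 2 : ℝ) ^ ((1:ℝ)/2) = A' - A := by
        rw [← Real.rpow_natCast (A' - A) 2, ← Real.rpow_mul hΔ0.le]
        norm_num
      rw [← h2, ha2]
    rw [e0, Real.mul_rpow hlm.le hA'.le, mul_assoc, ← Real.rpow_add hA']
    norm_num
    exact Real.rpow_le_rpow hθ.le hls1 (by norm_num)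
  · -- p ≥ 2
    have hp2' : 2 ≤ p := hp2
    have hrpos : 0 < r := by
      rcases eq_or_lt_of_le hr with h0 | h0
      · exfalso
        have : r ^ (p - 1) = 0 := by
          rw [← h0]
          exact zero_pow (by omega)
        rw [this, mul_zero] at hls; linarith
      · exact h0
    have hδ : 0 < A' * r ^ 2 / lm := by positivity
    have hcast : ((p - 1 : ℕ) : ℝ) = P - 1 := by
      rw [hP]; push_cast [hp]; ring
    have hlmr : 0 < lm * r ^ (p - 1) := by positivity
    -- both sides as exp
    have step1 : θ ^ (2 / (3 * P + 1)) ≤ (lm * r ^ (p - 1)) ^ (2 / (3 * P + 1)) :=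
      rpow_le_rpow hθ.le hls (by positivity)
    refine step1.trans (le_of_eq ?_)
    rw [rpow_def_of_pos hlmr, rpow_def_of_pos hu, rpow_def_of_pos hδ, ← exp_add]
    congr 1
    have l1 : log (lm * r ^ (p - 1)) = log lm + (P - 1) * log r := by
      rw [log_mul hlm.ne' (by positivity), log_pow, hcast]
    have l2 : log ((A' - A) * A' ^ (-(P / (P + 1))))
        = log (A' - A) + (-(P / (P + 1))) * log A' := by
      rw [log_mul hΔ0.ne' hApow.ne', log_rpow hA']
    have l3 : log (A' * r ^ 2 / lm) = log A' + 2 * log r - log lm := by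
      rw [log_div (by positivity) hlm.ne', log_mul hA'.ne' (by positivity), log_pow]
      norm_num
    have l4 : log (A' - A) = (log lm + log A') / 2 := by
      have h := Real.log_pow (A' - A) 2
      rw [ha2, log_mul hlm.ne' hA'.ne'] at h
      push_cast at h
      linarith
    rw [l1, l2, l3, l4]
    field_simp
    ring

theorem stmt_16 (d p : ℕ) (hd : 1 ≤ d) (hp : 1 ≤ p)
    (Φ : EuclideanSpace ℝ (Fin d) → ℝ)
    (hconv : ConvexOn ℝ Set.univ Φ) (hsmooth : ContDiff ℝ 2 Φ)
    (σ θ : ℝ) (hσ : σ ∈ Set.Ioo (0:ℝ) 1) (hθ : 0 < θ)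
    (xstar : EuclideanSpace ℝ (Fin d)) (hstar : ∀ y, Φ xstar ≤ Φ y)
    (x v w vt : ℕ → EuclideanSpace ℝ (Fin d)) (γ eps lam α E : ℕ → ℝ)
    (hproj : ∀ z : EuclideanSpace ℝ (Fin d), (∀ y, Φ z ≤ Φ y) → ‖v 0 - xstar‖ ≤ ‖v 0 - z‖)
    (hγ0 : γ 0 = 1) (hγpos : ∀ k : ℕ, 0 < γ k)
    (hlampos : ∀ k : ℕ, 0 < lam (k+1)) (hepsnn : ∀ k : ℕ, 0 ≤ eps (k+1))
    (hα : ∀ k : ℕ, α (k+1) ∈ Set.Ioo (0:ℝ) 1)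
    (hαeq : ∀ k : ℕ, (α (k+1)) ^ 2 = lam (k+1) * ((1 - α (k+1)) * γ k))
    (hγ : ∀ k : ℕ, γ (k+1) = (1 - α (k+1)) * γ k)
    (hvt : ∀ k : ℕ, vt k = (1 - α (k+1)) • x k + α (k+1) • v k)
    (hw : ∀ k : ℕ, ∀ y : EuclideanSpace ℝ (Fin d),
      Φ (x (k+1)) + ⟪y - x (k+1), w (k+1)⟫ - eps (k+1) ≤ Φ y)
    (herr : ∀ k : ℕ,
      ‖lam (k+1) • w (k+1) + x (k+1) - vt k‖ ^ 2 + 2 * lam (k+1) * eps (k+1) ≤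
        σ ^ 2 * ‖x (k+1) - vt k‖ ^ 2)
    (hls : ∀ k : ℕ, θ ≤ lam (k+1) * ‖x (k+1) - vt k‖ ^ (p - 1))
    (hv : ∀ k : ℕ, v (k+1) = v k - (α (k+1) / γ (k+1)) • w (k+1))
    (hE : ∀ k : ℕ, E k = (1 / γ k) * (Φ (x k) - Φ xstar) + (1/2) * ‖v k - xstar‖ ^ 2)
    -- extra assumption for p ≥ 2
    (hE0 : 2 ≤ p → 0 < E 0) :
    ∀ k : ℕ, 1 ≤ k →
      γ k ≤ (((p:ℝ) + 1) ^ ((3 * (p:ℝ) + 1) / 2) / θ) *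
        (2 * E 0 / (1 - σ ^ 2)) ^ (((p:ℝ) - 1) / 2) *
        (k:ℝ) ^ (-((3 * (p:ℝ) + 1) / 2)) := by
  obtain ⟨hσ0, hσ1⟩ := hσ
  have hσ2 : 0 < 1 - σ ^ 2 := by nlinarith
  set P : ℝ := (p:ℝ) with hPdef
  have hP1 : (1:ℝ) ≤ P := by rw [hPdef]; exact_mod_cast hp
  have h3P : (0:ℝ) < 3 * P + 1 := by linarith
  have hP1' : (0:ℝ) < P + 1 := by linarith
  set A : ℕ → ℝ := fun k => (γ k)⁻¹ with hAdef
  have hApos : ∀ k, 0 < A k := fun k => inv_pos.2 (hγpos k)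
  have hA0 : A 0 = 1 := by simp [hAdef, hγ0]
  set a' : ℕ → ℝ := fun j => α (j+1) * (γ (j+1))⁻¹ with ha'def
  have ha'pos : ∀ j, 0 < a' j := fun j => mul_pos (hα j).1 (inv_pos.2 (hγpos (j+1)))
  have hαne : ∀ j, (1:ℝ) - α (j+1) ≠ 0 := fun j => by intro h; have := (hα j).2; linarith
  have hAstep : ∀ j, A (j+1) = A j + a' j := by
    intro j
    have hγj := hγ j
    have h1 : (1:ℝ) - α (j+1) ≠ 0 := hαne j
    have h2 := (hγpos j).ne'
    have h3 := (hγpos (j+1)).ne'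
    simp only [hAdef, ha'def]
    rw [hγj] at h3 ⊢
    field_simp
    ring
  have ha2' : ∀ j, (a' j) ^ 2 = lam (j+1) * A (j+1) := by
    intro j
    have h3 := (hγpos (j+1)).ne'
    have heq := hαeq j
    rw [← hγ j] at heq
    simp only [hAdef, ha'def]
    field_simp
    linear_combination heq
  -- Lyapunov decrease
  have hdec : ∀ j, E (j+1) ≤ E j - ((1 - σ ^ 2) / (2 * lam (j+1))) * A (j+1) *
      ‖x (j+1) - vt j‖ ^ 2 := by
    intro j
    have hVeq : A j • x j + a' j • v j = A (j+1) • vt j := by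
      rw [hvt j, smul_add, smul_smul, smul_smul]
      have c1 : A (j+1) * (1 - α (j+1)) = A j := by
        simp only [hAdef]
        rw [hγ j, mul_inv, mul_comm ((1 - α (j+1))⁻¹), mul_assoc,
          inv_mul_cancel₀ (hαne j), mul_one]
      have c2 : A (j+1) * α (j+1) = a' j := by
        simp only [hAdef, ha'def]; ring
      rw [c1, c2]
    have hv1 : v (j+1) = v j - a' j • w (j+1) := by
      rw [hv j, div_eq_mul_inv]
    have key := lyap_step Φ xstar (x j) (x (j+1)) (v j) (v (j+1)) (vt j) (w (j+1))
      (A j) (A (j+1)) (a' j) (lam (j+1)) (eps (j+1)) σ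
      (hApos j) (hApos (j+1)) (hlampos j) (ha'pos j) (hAstep j) (ha2' j)
      hVeq hv1 (hw j xstar) (hw j (x j)) (herr j)
    rw [hE (j+1), hE j]
    have e1 : (1:ℝ) / γ (j+1) = A (j+1) := one_div _
    have e2 : (1:ℝ) / γ j = A j := one_div _
    rw [e1, e2]
    exact key
  have hEnn : ∀ k, 0 ≤ E k := by
    intro k
    rw [hE k]
    have h1 : 0 ≤ 1 / γ k * (Φ (x k) - Φ xstar) :=
      mul_nonneg (le_of_lt (div_pos one_pos (hγpos k))) (sub_nonneg.2 (hstar (x k)))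
    have h2 : 0 ≤ (1/2 : ℝ) * ‖v k - xstar‖ ^ 2 := by positivity
    linarith
  set δ : ℕ → ℝ := fun j => A (j+1) * ‖x (j+1) - vt j‖ ^ 2 / lam (j+1) with hδdef
  have hδnn : ∀ j, 0 ≤ δ j := by
    intro j
    have := (hApos (j+1)).le
    have := (hlampos j).le
    positivity
  set C : ℝ := 2 * E 0 / (1 - σ ^ 2) with hCdef
  have hCnn : 0 ≤ C := by
    have := hEnn 0
    positivity
  have hsumδ : ∀ K : ℕ, ∑ j ∈ Finset.range K, δ j ≤ C := by
    intro K
    have step : ∀ j ∈ Finset.range K, ((1 - σ ^ 2) / 2) * δ j ≤ E j - E (j+1) := by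
      intro j _
      have h := hdec j
      have heq : ((1 - σ ^ 2) / 2) * δ j
          = ((1 - σ ^ 2) / (2 * lam (j+1))) * A (j+1) * ‖x (j+1) - vt j‖ ^ 2 := by
        simp only [hδdef]
        field_simp
      rw [heq]; linarith
    have hsum := Finset.sum_le_sum step
    rw [Finset.sum_range_sub' E K] at hsum
    rw [← Finset.mul_sum] at hsum
    have h1 : ((1 - σ ^ 2) / 2) * ∑ j ∈ Finset.range K, δ j ≤ E 0 := by
      have := hEnn K; linarith
    rw [hCdef, le_div_iff₀ hσ2]
    linarith
  -- A is at least 1 and increasing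
  have hA1 : ∀ k, 1 ≤ A k := by
    intro k
    induction k with
    | zero => rw [hA0]
    | succ j ih => rw [hAstep j]; have := ha'pos j; linarith
  have hAd : ∀ j, A (j+1) - A j = a' j := fun j => by rw [hAstep j]; ring
  set s : ℝ := 1 / (P + 1) with hsdef
  set ae : ℝ := 2 * (P + 1) / (3 * P + 1) with haedef
  set be : ℝ := (P - 1) / (3 * P + 1) with hbedef
  have haepos : 0 < ae := by rw [haedef]; positivity
  have hbenn : 0 ≤ be := by rw [hbedef]; exact div_nonneg (by linarith) (by linarith)
  have habe : ae + be = 1 := by rw [haedef, hbedef]; field_simp; ring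
  set u : ℕ → ℝ := fun j => (A (j+1) - A j) * A (j+1) ^ (-(P / (P + 1))) with hudef
  have hupos : ∀ j, 0 < u j := by
    intro j
    apply mul_pos
    · rw [hAd j]; exact ha'pos j
    · exact rpow_pos_of_pos (hApos (j+1)) _
  have hstep2 : ∀ j, θ ^ (2 / (3 * P + 1)) ≤ u j ^ ae * δ j ^ be := by
    intro j
    exact aux_step p hp θ (lam (j+1)) (A j) (A (j+1)) ‖x (j+1) - vt j‖ hθ (hlampos j)
      (hApos (j+1)) (by have := ha'pos j; have := hAd j; linarith)
      (by rw [hAd j]; exact ha2' j) (hls j) (norm_nonneg _)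
  have hspos : 0 < s := by rw [hsdef]; positivity
  have hPs : (P + 1) * s = 1 := by rw [hsdef]; field_simp
  have husum : ∀ K : ℕ, ∑ j ∈ Finset.range K, u j ≤ (P + 1) * A K ^ s := by
    intro K
    have per : ∀ j ∈ Finset.range K,
        u j ≤ (P+1) * A (j+1) ^ s - (P+1) * A j ^ s := by
      intro j _
      have hcon := aux_concave (s := s) (a := A (j+1)) (b := A j) hspos
        (by rw [hsdef, div_le_one hP1']; linarith) (hApos j)
        (by have := ha'pos j; have := hAd j; linarith)
      have hse : s - 1 = -(P / (P+1)) := by rw [hsdef]; field_simp; ring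
      rw [hse] at hcon
      have huj : u j = (A (j+1) - A j) * A (j+1) ^ (-(P / (P + 1))) := rfl
      calc u j = (P+1) * (s * u j) := by rw [← mul_assoc, hPs, one_mul]
        _ ≤ (P+1) * (A (j+1) ^ s - A j ^ s) := by
            apply mul_le_mul_of_nonneg_left _ (by positivity)
            rw [huj]; exact hcon
        _ = (P+1) * A (j+1) ^ s - (P+1) * A j ^ s := by ring
    calc ∑ j ∈ Finset.range K, u j
        ≤ ∑ j ∈ Finset.range K, ((P+1) * A (j+1) ^ s - (P+1) * A j ^ s) :=
          Finset.sum_le_sum per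
      _ = (P+1) * A K ^ s - (P+1) * A 0 ^ s :=
          Finset.sum_range_sub (fun j => (P+1) * A j ^ s) K
      _ ≤ (P + 1) * A K ^ s := by
          rw [hA0, one_rpow]
          nlinarith
  intro K hK
  have hKpos : (0:ℝ) < (K:ℝ) := by exact_mod_cast hK
  have hsum1 : (K:ℝ) * θ ^ (2 / (3*P+1)) ≤ ∑ j ∈ Finset.range K, u j ^ ae * δ j ^ be := by
    calc (K:ℝ) * θ ^ (2/(3*P+1)) = ∑ _j ∈ Finset.range K, θ ^ (2/(3*P+1)) := by
          rw [Finset.sum_const, Finset.card_range, nsmul_eq_mul]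
      _ ≤ _ := Finset.sum_le_sum (fun j _ => hstep2 j)
  have hsum2 := aux_holder (Finset.range K) u δ (fun j _ => (hupos j).le)
    (fun j _ => hδnn j) haepos hbenn habe
  have hsumu_nn : 0 ≤ ∑ j ∈ Finset.range K, u j :=
    Finset.sum_nonneg (fun j _ => (hupos j).le)
  have hsumδ_nn : 0 ≤ ∑ j ∈ Finset.range K, δ j :=
    Finset.sum_nonneg (fun j _ => hδnn j)
  have hAKs_nn : (0:ℝ) ≤ (P + 1) * A K ^ s :=
    le_of_lt (mul_pos (by linarith) (rpow_pos_of_pos (hApos K) s))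
  have hsum3 : (∑ j ∈ Finset.range K, u j) ^ ae * (∑ j ∈ Finset.range K, δ j) ^ be
      ≤ ((P+1) * A K ^ s) ^ ae * C ^ be := by
    apply mul_le_mul (rpow_le_rpow hsumu_nn (husum K) haepos.le)
      (rpow_le_rpow hsumδ_nn (hsumδ K) hbenn)
      (rpow_nonneg hsumδ_nn be) (rpow_nonneg hAKs_nn ae)
  have main1 : (K:ℝ) * θ ^ (2/(3*P+1)) ≤ ((P+1) * A K ^ s) ^ ae * C ^ be :=
    le_trans hsum1 (le_trans hsum2 hsum3)
  set m : ℝ := (3*P+1)/2 with hmdef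
  have hmpos : 0 < m := by rw [hmdef]; positivity
  have lhsnn : 0 ≤ (K:ℝ) * θ ^ (2/(3*P+1)) := by positivity
  have main2 := rpow_le_rpow lhsnn main1 hmpos.le
  have hθc : (θ ^ (2/(3*P+1))) ^ m = θ := by
    rw [← rpow_mul hθ.le]
    have : 2/(3*P+1) * m = 1 := by rw [hmdef]; field_simp
    rw [this, rpow_one]
  have lhs_eq : ((K:ℝ) * θ ^ (2/(3*P+1))) ^ m = (K:ℝ) ^ m * θ := by
    rw [mul_rpow hKpos.le (rpow_nonneg hθ.le _), hθc]
  have rhs_eq : (((P+1) * A K ^ s) ^ ae * C ^ be) ^ m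
      = (P+1) ^ (P+1) * A K * C ^ ((P-1)/2) := by
    rw [mul_rpow (rpow_nonneg hAKs_nn ae) (rpow_nonneg hCnn be),
      ← rpow_mul hAKs_nn, ← rpow_mul hCnn]
    have e1 : ae * m = P + 1 := by rw [haedef, hmdef]; field_simp
    have e2 : be * m = (P-1)/2 := by rw [hbedef, hmdef]; field_simp
    rw [e1, e2, mul_rpow (by linarith : (0:ℝ) ≤ P+1) (rpow_nonneg (hApos K).le s),
      ← rpow_mul (hApos K).le]
    have e3 : s * (P + 1) = 1 := by rw [mul_comm]; exact hPs
    rw [e3, rpow_one]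
  rw [lhs_eq, rhs_eq] at main2
  have hAK : γ K = (A K)⁻¹ := by simp [hAdef]
  have hKm : (0:ℝ) < (K:ℝ) ^ m := rpow_pos_of_pos hKpos m
  have hq_nn : (0:ℝ) ≤ C ^ ((P-1)/2) := rpow_nonneg hCnn _
  have hfin1 : γ K ≤ (P+1) ^ (P+1) * C ^ ((P-1)/2) / (θ * (K:ℝ)^m) := by
    rw [hAK, inv_eq_one_div, div_le_div_iff₀ (hApos K) (mul_pos hθ hKm)]
    linarith [main2]
  have hfin2 : (P+1) ^ (P+1) ≤ (P+1) ^ m :=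
    rpow_le_rpow_of_exponent_le (by linarith) (by rw [hmdef]; linarith)
  calc γ K ≤ (P+1) ^ (P+1) * C ^ ((P-1)/2) / (θ * (K:ℝ)^m) := hfin1
    _ ≤ (P+1) ^ m * C ^ ((P-1)/2) / (θ * (K:ℝ)^m) := by
        exact div_le_div_of_nonneg_right (mul_le_mul_of_nonneg_right hfin2 hq_nn)
          (le_of_lt (mul_pos hθ hKm))
    _ = ((P+1) ^ m / θ) * C ^ ((P-1)/2) * (K:ℝ) ^ (-m) := by
        rw [rpow_neg hKpos.le]
        field_simp
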